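/- arXiv:math/0209218 — 2 statements merged into one kernel-verified Lean document; each statement's English description precedes it below -/
import Mathlib

section
/- Let n ≥ 1 and let N ≡ 2 (mod 4) with N ≥ 6. Then Σ_{μ∈X_N} q^{(μ,μ+2ρ)} = 2^n · Σ_{μ∈X_{N/2}} q^{(μ,μ+2ρ)}, where both exponentials are taken with q^r = exp(2πi r/N). In particular Σ_{μ∈X_{N/2}} q^{(μ,μ+2ρ)} ≠ 0. -/
open Complex Finset

/-- `qp N r = exp(2πi r / N)`, i.e. `q^r` for `q = exp(2πi/N)`. -/
noncomputable def qp (N : ℕ) (r : ℚ) : ℂ :=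
  Complex.exp (2 * (Real.pi : ℂ) * Complex.I * (r : ℂ) / (N : ℂ))

/-- The Weyl vector of `osp(1|2n)`: `ρ_j = n - j + 1/2` for `j = 1, …, n`
(0-indexed: `ρ j = n - j - 1/2`). -/
def rhoV (n : ℕ) : Fin n → ℚ := fun j => (n : ℚ) - (j : ℚ) - 1/2

/-- The standard dot product on `ℚ^n`. -/
def dotp {n : ℕ} (x y : Fin n → ℚ) : ℚ := ∑ j, x j * y j

/-- Coercion of an integer vector to a rational vector. -/
def intC {n : ℕ} (lam : Fin n → ℤ) : Fin n → ℚ := fun j => (lam j : ℚ)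

/-- Coercion of an element of `X_M = {0,…,M-1}^n` to a rational vector. -/
def finC {n M : ℕ} (mu : Fin n → Fin M) : Fin n → ℚ := fun j => ((mu j : ℕ) : ℚ)

/-- The `j`-th standard basis vector of `ℚ^n`. -/
def stdB (n : ℕ) (j : Fin n) : Fin n → ℚ := fun l => if l = j then 1 else 0

/-- The hyperoctahedral group (Weyl group of `osp(1|2n)`): a permutation with signs. -/
abbrev HypOct (n : ℕ) := Equiv.Perm (Fin n) × (Fin n → ℤˣ)

/-- Action of the hyperoctahedral group on `ℚ^n` by signed permutation of coordinates. -/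
def Wact {n : ℕ} (σ : HypOct n) (x : Fin n → ℚ) : Fin n → ℚ :=
  fun j => ((σ.2 j : ℤ) : ℚ) * x (σ.1⁻¹ j)

/-- `ε'(σ) = sgn(π) · ∏_j s_j` for `σ = (π, s)`. -/
def epsW {n : ℕ} (σ : HypOct n) : ℤˣ :=
  Equiv.Perm.sign σ.1 * ∏ j, σ.2 j

/-- `S'_{λ,μ} = Σ_{σ∈W} ε'(σ) q^{2(λ+ρ, σ(μ+ρ))}` (for rational vectors `λ, μ`). -/
noncomputable def Sprime (n N : ℕ) (lam mu : Fin n → ℚ) : ℂ :=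
  ∑ σ : HypOct n,
    ((epsW σ : ℤ) : ℂ) * qp N (2 * dotp (lam + rhoV n) (Wact σ (mu + rhoV n)))

/-- `Q_μ = Σ_{σ∈W} ε'(σ) q^{2(ρ, σ(μ+ρ))}`. -/
noncomputable def Qmu (n N : ℕ) (mu : Fin n → ℤ) : ℂ :=
  ∑ σ : HypOct n,
    ((epsW σ : ℤ) : ℂ) * qp N (2 * dotp (rhoV n) (Wact σ (intC mu + rhoV n)))

/-- Gauss sum `G(N,m) = Σ_{j=0}^{N-1} q^{j(j+m)}` with `q = exp(2πi/N)`. -/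
noncomputable def GaussG (N : ℕ) (m : ℤ) : ℂ :=
  ∑ j : Fin N, qp N ((j : ℚ) * ((j : ℚ) + (m : ℚ)))

/-- `Σ_{μ ∈ X_M} q^{(μ, μ+2ρ)}` where `q = exp(2πi/N)`. -/
noncomputable def sumX (n N M : ℕ) : ℂ :=
  ∑ mu : Fin n → Fin M, qp N (dotp (finC mu) (finC mu + 2 • rhoV n))

/-- `Σ_{λ ∈ X_M} q^{(λ,λ)} S'_{λ,μ}` where `q = exp(2πi/N)`. -/
noncomputable def sumXS (n N M : ℕ) (mu : Fin n → ℤ) : ℂ :=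
  ∑ lam : Fin n → Fin M, qp N (dotp (finC lam) (finC lam)) * Sprime n N (finC lam) (intC mu)

noncomputable def qpz (N : ℕ) (a : ℤ) : ℂ := qp N (a : ℚ)

lemma qp_add (N : ℕ) (a b : ℚ) : qp N (a + b) = qp N a * qp N b := by
  rw [qp, qp, qp, ← Complex.exp_add]
  congr 1
  push_cast
  ring

lemma qpz_add (N : ℕ) (a b : ℤ) : qpz N (a + b) = qpz N a * qpz N b := by
  rw [qpz, qpz, qpz]; push_cast; exact qp_add N a b

lemma conj_qp (N : ℕ) (r : ℚ) : (starRingEnd ℂ) (qp N r) = qp N (-r) := by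
  rw [qp, qp, ← Complex.exp_conj]
  congr 1
  simp only [map_div₀, map_mul, Complex.conj_I, map_ratCast, map_natCast, map_ofNat,
    Complex.conj_ofReal]
  push_cast
  ring

lemma two_pi_I_ne : (2 * (Real.pi : ℂ) * Complex.I) ≠ 0 := by
  simp [Real.pi_ne_zero, Complex.I_ne_zero]

lemma qpz_eq_one_iff {N : ℕ} (hN : N ≠ 0) (a : ℤ) : qpz N a = 1 ↔ (N : ℤ) ∣ a := by
  have hNc : (N : ℂ) ≠ 0 := by exact_mod_cast hN
  rw [qpz, qp, Complex.exp_eq_one_iff]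
  constructor
  · rintro ⟨k, hk⟩
    rw [div_eq_iff hNc] at hk
    have h1 : ((a : ℤ) : ℂ) = ((N * k : ℤ) : ℂ) := by
      apply mul_left_cancel₀ two_pi_I_ne
      push_cast at hk ⊢
      linear_combination hk
    exact ⟨k, by exact_mod_cast h1⟩
  · rintro ⟨k, rfl⟩
    refine ⟨k, ?_⟩
    field_simp
    push_cast
    ring

lemma qpz_congr {N : ℕ} (hN : N ≠ 0) {a b : ℤ} (h : (N : ℤ) ∣ a - b) :
    qpz N a = qpz N b := by
  have : qpz N (b + (a - b)) = qpz N b * qpz N (a - b) := qpz_add N b (a - b)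
  rw [add_sub_cancel] at this
  rw [this, (qpz_eq_one_iff hN _).2 h, mul_one]

lemma qpz_mul_nat (N : ℕ) (c : ℤ) (l : ℕ) : qpz N (c * l) = qpz N c ^ l := by
  rw [qpz, qpz, qp, qp, ← Complex.exp_nat_mul]
  congr 1
  push_cast
  ring

lemma sum_qpz_linear {N : ℕ} (hN : N ≠ 0) (c : ℤ) :
    ∑ l ∈ Finset.range N, qpz N (c * l) = if (N : ℤ) ∣ c then (N : ℂ) else 0 := by
  have h : ∀ l ∈ Finset.range N, qpz N (c * l) = qpz N c ^ l := fun l _ => qpz_mul_nat N c l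
  rw [Finset.sum_congr rfl h]
  by_cases hc : (N : ℤ) ∣ c
  · rw [if_pos hc, (qpz_eq_one_iff hN c).2 hc]
    simp
  · rw [if_neg hc, geom_sum_eq, ← qpz_mul_nat, mul_comm c (N:ℤ)]
    · rw [(qpz_eq_one_iff hN _).2 ⟨c, rfl⟩, sub_self, zero_div]
    · intro h1
      exact hc ((qpz_eq_one_iff hN c).1 h1)

lemma zmod_sum_val (N : ℕ) [NeZero N] (g : ℕ → ℂ) :
    ∑ x : ZMod N, g x.val = ∑ k ∈ Finset.range N, g k := by
  refine Finset.sum_nbij' (fun x => x.val) (fun k => (k : ZMod N)) ?_ ?_ ?_ ?_ ?_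
  · intro x _; exact Finset.mem_range.2 (ZMod.val_lt x)
  · intro k _; exact Finset.mem_univ _
  · intro x _; simp [ZMod.natCast_val, ZMod.cast_id]
  · intro k hk; exact ZMod.val_cast_of_lt (Finset.mem_range.1 hk)
  · intro x _; rfl

lemma conj_qpz (N : ℕ) (a : ℤ) : (starRingEnd ℂ) (qpz N a) = qpz N (-a) := by
  rw [qpz, qpz]; push_cast; exact conj_qp N a

lemma qpz_congr_nat {N : ℕ} (hN : N ≠ 0) (m : ℤ) {a b : ℕ} (h : a ≡ b [MOD N])
    (c : ℤ) : qpz N ((a : ℤ) * (a + m) - c) = qpz N ((b : ℤ) * (b + m) - c) := by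
  apply qpz_congr hN
  have hd : (N : ℤ) ∣ (b : ℤ) - (a : ℤ) := h.dvd
  have : ((a : ℤ) * (a + m) - c) - ((b : ℤ) * (b + m) - c)
      = ((b : ℤ) - a) * (-(a + b + m)) := by ring
  rw [this]
  exact hd.mul_right _

lemma inner_shift {N : ℕ} (hN : N ≠ 0) (m : ℤ) (L : ℕ) :
    ∑ k ∈ Finset.range N, qpz N ((k : ℤ) * (k + m) - (L : ℤ) * (L + m))
      = ∑ d ∈ Finset.range N, qpz N ((d : ℤ) * (d + m)) * qpz N (2 * d * L) := by
  haveI : NeZero N := ⟨hN⟩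
  rw [← zmod_sum_val N (fun k => qpz N ((k : ℤ) * (k + m) - (L : ℤ) * (L + m))),
      ← zmod_sum_val N (fun d => qpz N ((d : ℤ) * (d + m)) * qpz N (2 * d * L))]
  rw [← Equiv.sum_comp (Equiv.addRight (L : ZMod N))
      (fun x => qpz N ((x.val : ℤ) * (x.val + m) - (L : ℤ) * (L + m)))]
  refine Finset.sum_congr rfl fun d _ => ?_
  have hmod : (d + (L : ZMod N)).val ≡ d.val + L [MOD N] := by
    have : (((d + (L : ZMod N)).val : ℕ) : ZMod N) = ((d.val + L : ℕ) : ZMod N) := by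
      push_cast
      simp [ZMod.natCast_val, ZMod.cast_id]
    exact (ZMod.natCast_eq_natCast_iff _ _ _).1 this
  rw [show ((Equiv.addRight (L : ZMod N)) d) = d + (L : ZMod N) from rfl]
  rw [qpz_congr_nat hN m hmod]
  rw [show ((d.val + L : ℕ) : ℤ) * ((d.val + L : ℕ) + m) - (L : ℤ) * (L + m)
      = (d.val : ℤ) * (d.val + m) + 2 * d.val * L by push_cast; ring]
  exact qpz_add N _ _

noncomputable def Sg (N M : ℕ) (m : ℤ) : ℂ :=
  ∑ k ∈ Finset.range M, qpz N ((k : ℤ) * (k + m))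

lemma gauss_sq {K : ℕ} (hK : K ≠ 0) (hKodd : Odd (K : ℤ)) {m : ℤ} (hm : Odd m) :
    Sg (2 * K) (2 * K) m * (starRingEnd ℂ) (Sg (2 * K) (2 * K) m) = 2 * (2 * K : ℕ) := by
  set N := 2 * K with hNdef
  have hN : N ≠ 0 := by positivity
  rw [Sg, map_sum]
  have hconj : ∀ l ∈ Finset.range N, (starRingEnd ℂ) (qpz N ((l : ℤ) * (l + m)))
      = qpz N (-((l : ℤ) * (l + m))) := fun l _ => conj_qpz N _
  rw [Finset.sum_congr rfl hconj, Finset.sum_mul_sum]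
  have step1 : ∀ k l : ℕ, qpz N ((k : ℤ) * (k + m)) * qpz N (-((l : ℤ) * (l + m)))
      = qpz N ((k : ℤ) * (k + m) - (l : ℤ) * (l + m)) := by
    intro k l
    rw [← qpz_add]; ring_nf
  calc ∑ k ∈ Finset.range N, ∑ l ∈ Finset.range N,
        qpz N ((k : ℤ) * (k + m)) * qpz N (-((l : ℤ) * (l + m)))
      = ∑ l ∈ Finset.range N, ∑ k ∈ Finset.range N,
        qpz N ((k : ℤ) * (k + m) - (l : ℤ) * (l + m)) := by
        rw [Finset.sum_comm]
        exact Finset.sum_congr rfl fun l _ => Finset.sum_congr rfl fun k _ => step1 k l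
    _ = ∑ l ∈ Finset.range N, ∑ d ∈ Finset.range N,
        qpz N ((d : ℤ) * (d + m)) * qpz N (2 * d * l) := by
        exact Finset.sum_congr rfl fun l _ => inner_shift hN m l
    _ = ∑ d ∈ Finset.range N, qpz N ((d : ℤ) * (d + m)) *
          ∑ l ∈ Finset.range N, qpz N ((2 * d) * l) := by
        rw [Finset.sum_comm]
        exact Finset.sum_congr rfl fun d _ => by rw [Finset.mul_sum]
    _ = ∑ d ∈ Finset.range N, qpz N ((d : ℤ) * (d + m)) *
          (if (N : ℤ) ∣ 2 * d then (N : ℂ) else 0) := by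
        exact Finset.sum_congr rfl fun d _ => by rw [sum_qpz_linear hN]
    _ = 2 * (N : ℕ) := by
        rw [← Finset.sum_subset (s₁ := ({0, K} : Finset ℕ)) ?_ ?_]
        · have h0K : (0 : ℕ) ≠ K := fun h => hK h.symm
          rw [Finset.sum_pair h0K]
          have e0 : qpz N ((0 : ℕ) * ((0:ℕ) + m)) = 1 := by
            simp [qpz, qp]
          obtain ⟨t, ht⟩ : Even ((K : ℤ) + m) := by
            rcases hKodd with ⟨u, hu⟩; rcases hm with ⟨v, hv⟩
            exact ⟨u + v + 1, by omega⟩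
          have eK : qpz N ((K : ℕ) * ((K:ℕ) + m)) = 1 := by
            apply (qpz_eq_one_iff hN _).2
            exact ⟨t, by push_cast [hNdef]; nlinarith [ht]⟩
          have hdvd0 : (N : ℤ) ∣ 2 * (0 : ℕ) := by simp
          have hdvdK : (N : ℤ) ∣ 2 * (K : ℕ) := by push_cast [hNdef]; exact ⟨1, by ring⟩
          rw [if_pos hdvd0, if_pos hdvdK]
          push_cast at e0 eK ⊢
          rw [e0, eK]
          ring
        · intro x hx
          rcases Finset.mem_insert.1 hx with rfl | hx
          · exact Finset.mem_range.2 (by omega)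
          · rw [Finset.mem_singleton.1 hx]
            exact Finset.mem_range.2 (by omega)
        · intro d hd hdn
          have hdK : d ≠ 0 ∧ d ≠ K := by
            constructor <;> intro h <;> exact hdn (by simp [h])
          have : ¬ ((N : ℤ) ∣ 2 * d) := by
            intro hdvd
            have : (2 * K : ℤ) ∣ 2 * d := by push_cast [hNdef] at hdvd ⊢; exact hdvd
            have hKd : (K : ℤ) ∣ (d : ℤ) :=
              (mul_dvd_mul_iff_left (two_ne_zero)).1 this
            have hKd' : K ∣ d := by exact_mod_cast hKd
            have hdlt : d < 2 * K := Finset.mem_range.1 hd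
            rcases hKd' with ⟨c, rfl⟩
            rcases hdK with ⟨h1, h2⟩
            have hc2 : c < 2 := by
              by_contra hc
              push_neg at hc
              nlinarith [Nat.one_le_iff_ne_zero.2 hK]
            interval_cases c <;> omega
          rw [if_neg this, mul_zero]

lemma gauss_ne_zero {K : ℕ} (hK : K ≠ 0) (hKodd : Odd (K : ℤ)) {m : ℤ} (hm : Odd m) :
    Sg (2 * K) (2 * K) m ≠ 0 := by
  intro h
  have := gauss_sq hK hKodd hm
  rw [h, zero_mul] at this
  have h2 : (2 * (2 * K : ℕ) : ℂ) ≠ 0 := by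
    simp only [ne_eq, mul_eq_zero, Nat.cast_eq_zero]
    push_neg
    exact ⟨two_ne_zero, by omega⟩
  exact h2 this.symm

lemma gauss_halving {K : ℕ} (hK : K ≠ 0) (hKodd : Odd (K : ℤ)) {m : ℤ} (hm : Odd m) :
    Sg (2 * K) (2 * K) m = 2 * Sg (2 * K) K m := by
  have hN : 2 * K ≠ 0 := by positivity
  obtain ⟨t, ht⟩ : Even ((K : ℤ) + m) := by
    rcases hKodd with ⟨u, hu⟩; rcases hm with ⟨v, hv⟩
    exact ⟨u + v + 1, by omega⟩
  have key : ∀ k ∈ Finset.range K, qpz (2 * K) (((K + k : ℕ) : ℤ) * ((K + k : ℕ) + m))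
      = qpz (2 * K) ((k : ℤ) * (k + m)) := by
    intro k _
    apply qpz_congr hN
    refine ⟨(t + k), ?_⟩
    push_cast
    linear_combination (K : ℤ) * ht
  calc Sg (2 * K) (2 * K) m
      = ∑ k ∈ Finset.range (K + K), qpz (2 * K) ((k : ℤ) * (k + m)) := by
        rw [Sg, show 2 * K = K + K from by omega]
    _ = ∑ k ∈ Finset.range K, qpz (2 * K) ((k : ℤ) * (k + m))
        + ∑ k ∈ Finset.range K, qpz (2 * K) (((K + k : ℕ) : ℤ) * ((K + k : ℕ) + m)) :=
        Finset.sum_range_add _ K K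
    _ = 2 * Sg (2 * K) K m := by
        rw [Finset.sum_congr rfl key, Sg]; ring

lemma sumX_factor (n N M : ℕ) :
    sumX n N M = ∏ j : Fin n, Sg N M (2 * (n : ℤ) - 2 * (j : ℤ) - 1) := by
  have hterm : ∀ j : Fin n, Sg N M (2 * (n : ℤ) - 2 * (j : ℤ) - 1)
      = ∑ k : Fin M, qp N ((k : ℚ) * ((k : ℚ) + 2 * rhoV n j)) := by
    intro j
    rw [Sg, ← Fin.sum_univ_eq_sum_range
      (fun k => qpz N ((k : ℤ) * (k + (2 * (n : ℤ) - 2 * (j : ℤ) - 1))))]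
    refine Finset.sum_congr rfl fun k _ => ?_
    rw [qpz]
    congr 1
    rw [rhoV]
    push_cast
    ring
  rw [Finset.prod_congr rfl (fun j _ => hterm j), Fintype.prod_sum]
  rw [sumX]
  refine Finset.sum_congr rfl fun mu _ => ?_
  rw [show dotp (finC mu) (finC mu + 2 • rhoV n)
      = ∑ j : Fin n, (((mu j : ℕ) : ℚ) * (((mu j : ℕ) : ℚ) + 2 * rhoV n j)) from by
    rw [dotp]
    refine Finset.sum_congr rfl fun j _ => ?_
    simp [finC, Pi.add_apply, Pi.smul_apply]]
  induction (Finset.univ : Finset (Fin n)) using Finset.cons_induction with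
  | empty => simp [qp]
  | cons a s ha ih => rw [Finset.sum_cons, Finset.prod_cons, qp_add, ih]

/-- For `n ≥ 1` and `N ≡ 2 (mod 4)`, `N ≥ 6`,
`Σ_{μ∈X_N} q^{(μ,μ+2ρ)} = 2^n · Σ_{μ∈X_{N/2}} q^{(μ,μ+2ρ)}` (both with
`q^r = exp(2πi r/N)`), and the sum over `X_{N/2}` is nonzero. -/
theorem sumX_halving (n N : ℕ) (hn : 1 ≤ n) (hN : 6 ≤ N) (hN4 : N % 4 = 2) :
    sumX n N N = 2 ^ n * sumX n N (N / 2) ∧ sumX n N (N / 2) ≠ 0 := by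
  obtain ⟨K, rfl⟩ : ∃ K, N = 2 * K := ⟨N / 2, by omega⟩
  have hKhalf : 2 * K / 2 = K := by omega
  have hK : K ≠ 0 := by omega
  have hKodd : Odd (K : ℤ) := by
    refine ⟨(K : ℤ) / 2, ?_⟩
    omega
  have hmodd : ∀ j : Fin n, Odd (2 * (n : ℤ) - 2 * (j : ℤ) - 1) := by
    intro j
    exact ⟨(n : ℤ) - (j : ℤ) - 1, by ring⟩
  rw [hKhalf, sumX_factor n (2 * K) (2 * K), sumX_factor n (2 * K) K]
  constructor
  · calc (∏ j : Fin n, Sg (2 * K) (2 * K) (2 * (n : ℤ) - 2 * (j : ℤ) - 1))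
        = ∏ j : Fin n, (2 * Sg (2 * K) K (2 * (n : ℤ) - 2 * (j : ℤ) - 1)) :=
          Finset.prod_congr rfl fun j _ => gauss_halving hK hKodd (hmodd j)
      _ = 2 ^ n * ∏ j : Fin n, Sg (2 * K) K (2 * (n : ℤ) - 2 * (j : ℤ) - 1) := by
          rw [Finset.prod_mul_distrib, Finset.prod_const, Finset.card_univ, Fintype.card_fin]
  · apply Finset.prod_ne_zero_iff.2
    intro j _
    intro h0
    apply gauss_ne_zero hK hKodd (hmodd j)
    rw [gauss_halving hK hKodd (hmodd j), h0, mul_zero]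
end

section
/- Let n ≥ 1, N ≥ 1, and let μ ∈ ℤ^n. Then (Σ_{λ∈X_N} q^{(λ,λ+2ρ)}) · Q_μ · q^{−(μ,μ+2ρ)} = Σ_{λ∈X_N} q^{(λ,λ)} · S'_{λ,μ}. (Equivalently, the coefficients x_λ = q^{−(λ,2ρ)}/Σ_{ν∈X_N} q^{(ν,ν+2ρ)} solve Q_μ q^{−(μ+2ρ,μ)} = Σ_{λ∈X_N} x_λ q^{(λ+2ρ,λ)} S'_{λ,μ} whenever the normalizing sum is nonzero.) -/
open Complex Finset

lemma qp_zero (N : ℕ) : qp N 0 = 1 := by simp [qp]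

lemma qp_intN (N : ℕ) (hN : N ≠ 0) (m : ℤ) : qp N ((N : ℚ) * m) = 1 := by
  unfold qp
  have hNc : (N : ℂ) ≠ 0 := Nat.cast_ne_zero.mpr hN
  have : 2 * (Real.pi : ℂ) * Complex.I * (((N : ℚ) * m : ℚ) : ℂ) / (N : ℂ)
      = (m : ℤ) * (2 * (Real.pi : ℂ) * Complex.I) := by
    push_cast; field_simp
  rw [this, Complex.exp_int_mul_two_pi_mul_I]

lemma qp_mod (N : ℕ) (hN : N ≠ 0) (a b : ℚ) (m : ℤ) (h : a - b = (N : ℚ) * m) :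
    qp N a = qp N b := by
  have : a = b + (N : ℚ) * m := by linarith
  rw [this, qp_add, qp_intN N hN, mul_one]

lemma qp_sum (N : ℕ) {α : Type*} (s : Finset α) (f : α → ℚ) :
    qp N (∑ j ∈ s, f j) = ∏ j ∈ s, qp N (f j) := by
  classical
  induction s using Finset.induction with
  | empty => simp [qp_zero]
  | insert _ _ h ih => rw [Finset.sum_insert h, Finset.prod_insert h, qp_add, ih]

lemma sum_sq_shift (N : ℕ) (hN : 1 ≤ N) (m : ℤ) :
    ∑ k : Fin N, qp N (((k : ℚ) + ((m : ℚ) + 1/2)) ^ 2)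
      = ∑ k : Fin N, qp N (((k : ℚ) + 1/2) ^ 2) := by
  haveI : NeZero N := ⟨by omega⟩
  have hNZ : (N : ℤ) ≠ 0 := by omega
  have hb : (m % (N : ℤ)).toNat < N := by
    have h1 : 0 ≤ m % (N : ℤ) := Int.emod_nonneg m hNZ
    have h2 : m % (N : ℤ) < N := Int.emod_lt_of_pos m (by omega)
    omega
  set b : Fin N := ⟨(m % (N : ℤ)).toNat, hb⟩ with hbdef
  rw [← Equiv.sum_comp (Equiv.addRight b) (fun k : Fin N => qp N (((k : ℚ) + 1/2) ^ 2))]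
  apply Finset.sum_congr rfl
  intro k _
  simp only [Equiv.coe_addRight]
  have hval : ((k + b : Fin N) : ℕ) = (k.val + b.val) % N := Fin.val_add k b
  set A : ℤ := (k : ℤ) + m with hA
  set B : ℤ := ((k + b : Fin N) : ℤ) with hB
  have hb' : (b : ℤ) = m % (N : ℤ) := by
    simp [hbdef, Int.toNat_of_nonneg (Int.emod_nonneg m hNZ)]
  have hBeq : B = ((k : ℤ) + m % (N : ℤ)) % (N : ℤ) := by
    rw [hB, ← hb']
    exact_mod_cast congrArg (Nat.cast : ℕ → ℤ) hval
  have hmm : (m % (N : ℤ)) ≡ m [ZMOD (N : ℤ)] := Int.emod_emod_of_dvd m dvd_rfl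
  have hmodeq : B ≡ A [ZMOD (N : ℤ)] := by
    rw [hBeq, hA]
    exact (Int.emod_emod_of_dvd _ dvd_rfl).trans (Int.ModEq.add_left _ hmm)
  obtain ⟨s, hs⟩ : ∃ s : ℤ, A - B = (N : ℤ) * s := hmodeq.dvd
  apply qp_mod N (by omega) _ _ (s * (A + B + 1))
  have hsQ : (A : ℚ) - (B : ℚ) = (N : ℚ) * s := by exact_mod_cast hs
  have hAQ : ((k : ℚ) + ((m : ℚ) + 1/2)) = (A : ℚ) + 1/2 := by push_cast [hA]; ring
  have hBQ : (((k + b : Fin N) : ℚ) + 1/2) = (B : ℚ) + 1/2 := by push_cast [hB]; ring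
  rw [hAQ, hBQ]
  push_cast
  linear_combination ((A : ℚ) + B + 1) * hsQ

lemma gaussFactor_sum (n N : ℕ) (hN : 1 ≤ N) (v : Fin n → ℚ)
    (hv : ∀ j, ∃ m : ℤ, v j = m + 1/2) :
    ∑ lam : Fin n → Fin N, ∏ j, qp N ((finC lam j + v j) ^ 2)
      = (∑ k : Fin N, qp N (((k : ℚ) + 1/2) ^ 2)) ^ n := by
  classical
  calc ∑ lam : Fin n → Fin N, ∏ j, qp N ((finC lam j + v j) ^ 2)
      = ∏ j : Fin n, ∑ k : Fin N, qp N (((k : ℚ) + v j) ^ 2) := by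
        rw [Fintype.prod_sum (fun j (k : Fin N) => qp N (((k : ℚ) + v j) ^ 2))]
        rfl
    _ = ∏ _j : Fin n, (∑ k : Fin N, qp N (((k : ℚ) + 1/2) ^ 2)) := by
        apply Finset.prod_congr rfl
        intro j _
        obtain ⟨m, hm⟩ := hv j
        rw [hm]
        exact sum_sq_shift N hN m
    _ = _ := by rw [Finset.prod_const, Finset.card_univ, Fintype.card_fin]

lemma wact_half (n : ℕ) (mu : Fin n → ℤ) (σ : HypOct n) (j : Fin n) :
    ∃ m : ℤ, Wact σ (intC mu + rhoV n) j = m + 1/2 := by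
  rcases Int.units_eq_one_or (σ.2 j) with h | h
  · exact ⟨mu (σ.1⁻¹ j) + n - (σ.1⁻¹ j : ℕ) - 1, by
      simp only [Wact, Pi.add_apply, intC, rhoV, h]; push_cast; ring⟩
  · exact ⟨-(mu (σ.1⁻¹ j) + n - (σ.1⁻¹ j : ℕ)), by
      simp only [Wact, Pi.add_apply, intC, rhoV, h]; push_cast; ring⟩

lemma dotp_wact (n : ℕ) (σ : HypOct n) (x : Fin n → ℚ) :
    dotp (Wact σ x) (Wact σ x) = dotp x x := by
  have hu : ∀ u : ℤˣ, ((u : ℤ) : ℚ) * ((u : ℤ) : ℚ) = 1 := by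
    intro u; rcases Int.units_eq_one_or u with h | h <;> simp [h]
  calc dotp (Wact σ x) (Wact σ x)
      = ∑ j, x (σ.1⁻¹ j) * x (σ.1⁻¹ j) := by
        apply Finset.sum_congr rfl
        intro j _
        simp only [Wact]
        rw [show ((σ.2 j : ℤ) : ℚ) * x (σ.1⁻¹ j) * (((σ.2 j : ℤ) : ℚ) * x (σ.1⁻¹ j))
            = (((σ.2 j : ℤ) : ℚ) * ((σ.2 j : ℤ) : ℚ)) * (x (σ.1⁻¹ j) * x (σ.1⁻¹ j)) by ring,
          hu, one_mul]
    _ = dotp x x := Equiv.sum_comp σ.1⁻¹ (fun l => x l * x l)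


/-- For `n ≥ 1`, `N ≥ 1` and `μ ∈ ℤ^n`,
`(Σ_{λ∈X_N} q^{(λ,λ+2ρ)}) · Q_μ · q^{−(μ,μ+2ρ)} = Σ_{λ∈X_N} q^{(λ,λ)} S'_{λ,μ}`;
equivalently the coefficients `x_λ = q^{−(λ,2ρ)}/Σ_{ν∈X_N} q^{(ν,ν+2ρ)}` solve
`Q_μ q^{−(μ+2ρ,μ)} = Σ_{λ∈X_N} x_λ q^{(λ+2ρ,λ)} S'_{λ,μ}` when the normalizer is nonzero. -/
theorem x_lambda_solution (n N : ℕ) (hn : 1 ≤ n) (hN : 1 ≤ N) (mu : Fin n → ℤ) :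
    sumX n N N * Qmu n N mu * qp N (-(dotp (intC mu) (intC mu + 2 • rhoV n))) =
      sumXS n N N mu := by
  classical
  set F : ℂ := ∑ k : Fin N, qp N (((k : ℚ) + 1/2) ^ 2) with hF
  have rho_half : ∀ j : Fin n, ∃ m : ℤ, rhoV n j = m + 1/2 := by
    intro j
    exact ⟨(n : ℤ) - (j : ℕ) - 1, by simp only [rhoV]; push_cast; ring⟩
  -- Step A : sumX
  have hA : sumX n N N = qp N (-(dotp (rhoV n) (rhoV n))) * F ^ n := by
    rw [sumX]
    have h1 : ∀ lam : Fin n → Fin N,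
        qp N (dotp (finC lam) (finC lam + 2 • rhoV n))
          = (∏ j, qp N ((finC lam j + rhoV n j) ^ 2)) * qp N (-(dotp (rhoV n) (rhoV n))) := by
      intro lam
      have hexp : dotp (finC lam) (finC lam + 2 • rhoV n)
          = (∑ j, (finC lam j + rhoV n j) ^ 2) + -(dotp (rhoV n) (rhoV n)) := by
        simp only [dotp, Pi.add_apply, Pi.smul_apply, smul_eq_mul, ← Finset.sum_neg_distrib,
          ← Finset.sum_add_distrib]
        apply Finset.sum_congr rfl
        intro j _
        ring
      rw [hexp, qp_add, qp_sum]
    calc ∑ lam : Fin n → Fin N, qp N (dotp (finC lam) (finC lam + 2 • rhoV n))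
        = ∑ lam : Fin n → Fin N,
            (∏ j, qp N ((finC lam j + rhoV n j) ^ 2)) * qp N (-(dotp (rhoV n) (rhoV n))) :=
          Finset.sum_congr rfl fun lam _ => h1 lam
      _ = (∑ lam : Fin n → Fin N, ∏ j, qp N ((finC lam j + rhoV n j) ^ 2))
            * qp N (-(dotp (rhoV n) (rhoV n))) := by rw [← Finset.sum_mul]
      _ = F ^ n * qp N (-(dotp (rhoV n) (rhoV n))) := by
          rw [gaussFactor_sum n N hN (rhoV n) rho_half]
      _ = _ := by ring
  -- Step B : sumXS
  have hB : sumXS n N N mu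
      = (F ^ n * qp N (-(dotp (intC mu + rhoV n) (intC mu + rhoV n)))) * Qmu n N mu := by
    rw [sumXS, Qmu, Finset.mul_sum]
    simp only [Sprime, Finset.mul_sum]
    rw [Finset.sum_comm]
    apply Finset.sum_congr rfl
    intro σ _
    have hinner : ∑ lam : Fin n → Fin N,
        qp N (dotp (finC lam) (finC lam))
          * qp N (2 * dotp (finC lam + rhoV n) (Wact σ (intC mu + rhoV n)))
        = F ^ n * (qp N (-(dotp (intC mu + rhoV n) (intC mu + rhoV n)))
            * qp N (2 * dotp (rhoV n) (Wact σ (intC mu + rhoV n)))) := by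
      have h1 : ∀ lam : Fin n → Fin N,
          qp N (dotp (finC lam) (finC lam))
            * qp N (2 * dotp (finC lam + rhoV n) (Wact σ (intC mu + rhoV n)))
          = (∏ j, qp N ((finC lam j + Wact σ (intC mu + rhoV n) j) ^ 2))
            * (qp N (-(dotp (intC mu + rhoV n) (intC mu + rhoV n)))
              * qp N (2 * dotp (rhoV n) (Wact σ (intC mu + rhoV n)))) := by
        intro lam
        rw [← qp_add]
        have hexp : dotp (finC lam) (finC lam)
            + 2 * dotp (finC lam + rhoV n) (Wact σ (intC mu + rhoV n))
            = (∑ j, (finC lam j + Wact σ (intC mu + rhoV n) j) ^ 2)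
              + (-(dotp (Wact σ (intC mu + rhoV n)) (Wact σ (intC mu + rhoV n)))
                + 2 * dotp (rhoV n) (Wact σ (intC mu + rhoV n))) := by
          simp only [dotp, Pi.add_apply, Finset.mul_sum, ← Finset.sum_neg_distrib,
            ← Finset.sum_add_distrib]
          apply Finset.sum_congr rfl
          intro j _
          ring
        rw [hexp, dotp_wact, qp_add, qp_add, qp_sum]
      calc ∑ lam : Fin n → Fin N,
            qp N (dotp (finC lam) (finC lam))
              * qp N (2 * dotp (finC lam + rhoV n) (Wact σ (intC mu + rhoV n)))
          = ∑ lam : Fin n → Fin N,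
              (∏ j, qp N ((finC lam j + Wact σ (intC mu + rhoV n) j) ^ 2))
                * (qp N (-(dotp (intC mu + rhoV n) (intC mu + rhoV n)))
                  * qp N (2 * dotp (rhoV n) (Wact σ (intC mu + rhoV n)))) :=
            Finset.sum_congr rfl fun lam _ => h1 lam
        _ = (∑ lam : Fin n → Fin N,
              ∏ j, qp N ((finC lam j + Wact σ (intC mu + rhoV n) j) ^ 2))
              * (qp N (-(dotp (intC mu + rhoV n) (intC mu + rhoV n)))
                * qp N (2 * dotp (rhoV n) (Wact σ (intC mu + rhoV n)))) := by
            rw [← Finset.sum_mul]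
        _ = _ := by
            rw [gaussFactor_sum n N hN _ (wact_half n mu σ), ← hF]
    calc ∑ lam : Fin n → Fin N,
          qp N (dotp (finC lam) (finC lam))
            * (((epsW σ : ℤ) : ℂ)
              * qp N (2 * dotp (finC lam + rhoV n) (Wact σ (intC mu + rhoV n))))
        = ((epsW σ : ℤ) : ℂ) * ∑ lam : Fin n → Fin N,
            qp N (dotp (finC lam) (finC lam))
              * qp N (2 * dotp (finC lam + rhoV n) (Wact σ (intC mu + rhoV n))) := by
          rw [Finset.mul_sum]
          exact Finset.sum_congr rfl fun lam _ => by ring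
      _ = _ := by rw [hinner]; ring
  -- Step C : combine
  have hexp2 : dotp (intC mu + rhoV n) (intC mu + rhoV n)
      = dotp (rhoV n) (rhoV n) + dotp (intC mu) (intC mu + 2 • rhoV n) := by
    simp only [dotp, Pi.add_apply, Pi.smul_apply, smul_eq_mul, ← Finset.sum_add_distrib]
    apply Finset.sum_congr rfl
    intro j _
    ring
  rw [hA, hB]
  rw [show -(dotp (intC mu + rhoV n) (intC mu + rhoV n))
      = -(dotp (rhoV n) (rhoV n)) + -(dotp (intC mu) (intC mu + 2 • rhoV n)) by rw [hexp2]; ring,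
    qp_add]
  ring
end
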